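/- Let N ≥ 1, ε ∈ (0,1), and let c : Fin N → Fin N → ℝ be a matrix with s := Σ_{i,j} (c i j)² > 0 satisfying the Cordes condition (Σ_i c i i)² / s ≥ N − 1 + ε. Then, with λ = (Σ_i c i i)/s, one has Σ_{i,j} (δ_{ij} − λ · c i j)² ≤ 1 − ε. -/

import Mathlib

theorem stmt_6 (N : ℕ) (hN : 1 ≤ N) (ε : ℝ) (hε0 : 0 < ε) (hε1 : ε < 1)
    (c : Fin N → Fin N → ℝ)
    (hs : 0 < ∑ i, ∑ j, (c i j) ^ 2)
    (hcordes : (∑ i, c i i) ^ 2 / (∑ i, ∑ j, (c i j) ^ 2) ≥ (N : ℝ) - 1 + ε) :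
    ∑ i, ∑ j, ((if i = j then (1 : ℝ) else 0)
        - ((∑ k, c k k) / (∑ i, ∑ j, (c i j) ^ 2)) * c i j) ^ 2 ≤ 1 - ε := by
  set s := ∑ i, ∑ j, (c i j) ^ 2 with hsdef
  set t := ∑ k, c k k with htdef
  set lam := t / s with hlam
  have hexp : ∀ i j : Fin N,
      ((if i = j then (1 : ℝ) else 0) - lam * c i j) ^ 2
        = (if i = j then (1 : ℝ) else 0) - 2 * lam * (if i = j then c i j else 0)
          + lam ^ 2 * (c i j) ^ 2 := by
    intro i j
    by_cases h : i = j <;> simp [h] <;> ring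
  have hsum : ∑ i, ∑ j, ((if i = j then (1 : ℝ) else 0) - lam * c i j) ^ 2
      = N - 2 * lam * t + lam ^ 2 * s := by
    simp only [hexp, Finset.sum_add_distrib, Finset.sum_sub_distrib,
      Finset.sum_ite_eq', Finset.mem_univ, if_true, ← Finset.mul_sum]
    simp [htdef, hsdef, Finset.mul_sum]
  rw [hsum]
  have hs0 : s ≠ 0 := ne_of_gt hs
  have key : (N : ℝ) - 2 * lam * t + lam ^ 2 * s = N - t ^ 2 / s := by
    rw [hlam]
    field_simp
    ring
  rw [key]
  linarith [hcordes]
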